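/- The five-element lattice N5, with its unique antitone involution (0' = 1, a' = b, b' = a, c' = c, 1' = 0), cannot be equipped with operations ⊙, → making (N5, ≤, ⊙, →, 1) a residuated poset satisfying x' = x → 0 for all x. -/

import Mathlib

inductive N5 where
  | z | a | b | c | o
deriving DecidableEq

instance : Fintype N5 where
  elems := {.z, .a, .b, .c, .o}
  complete := by intro x; cases x <;> decide

namespace N5

/-- The order of N5: 0 < a < b < 1, c incomparable with a and b. -/
def leb : N5 → N5 → Bool
  | .z, _ => true
  | _, .o => true
  | .a, .a => true
  | .a, .b => true
  | .b, .b => true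
  | .c, .c => true
  | _, _ => false

instance : LE N5 := ⟨fun x y => leb x y = true⟩

instance : DecidableRel (α := N5) (· ≤ ·) :=
  fun x y => inferInstanceAs (Decidable (leb x y = true))

instance : PartialOrder N5 where
  le := (· ≤ ·)
  le_refl := by decide
  le_trans := by decide
  le_antisymm := by decide

/-- The involution 0' = 1, a' = b, b' = a, c' = c, 1' = 0. -/
def inv : N5 → N5
  | .z => .o
  | .a => .b
  | .b => .a
  | .c => .c
  | .o => .z

end N5

/-- N5 with its unique antitone involution cannot be made into a residuated
poset (N5, ≤, ⊙, →, 1) satisfying x' = x → 0. -/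
theorem stmt4 : ¬ ∃ (mul imp : N5 → N5 → N5),
    (∀ x y : N5, mul x y = mul y x) ∧
    (∀ x y z : N5, mul (mul x y) z = mul x (mul y z)) ∧
    (∀ x : N5, mul x .o = x) ∧
    (∀ x y z : N5, mul x y ≤ z ↔ x ≤ imp y z) ∧
    (∀ x : N5, imp x .z = N5.inv x) := by
  rintro ⟨mul, imp, hcomm, hassoc, hone, hadj, hinv⟩
  -- multiplication is monotone in the first argument
  have mono : ∀ x y z : N5, x ≤ y → mul x z ≤ mul y z := by
    intro x y z h
    exact (hadj x z (mul y z)).mpr (le_trans h ((hadj y z (mul y z)).mp (le_refl _)))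
  -- mul a c ≤ a
  have h1 : mul .a .c ≤ .a := by
    have := mono .c .o .a (by decide)
    rw [hcomm .o .a, hone] at this
    rw [hcomm]
    exact this
  -- mul a c ≤ c
  have h2 : mul .a .c ≤ .c := by
    have := mono .a .o .c (by decide)
    rw [hcomm .o .c, hone] at this
    exact this
  -- hence mul a c = z
  have h3 : mul .a .c ≤ .z := by
    revert h1 h2; cases mul .a .c <;> decide
  -- adjointness: a ≤ imp c z = c, contradiction
  have h4 : (N5.a : N5) ≤ .c := by
    have := (hadj .a .c .z).mp h3
    rwa [hinv] at this
  exact absurd h4 (by decide)
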